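/- Every f ∈ N_0^{(r,n)} with max(f) ≤ k decomposes according to the fibers of the value-count map f ↦ (n_0,...,n_k), n_j := #{i : f_i = j}, and consequently Σ_{f ∈ N_0^{(r,n)}, max(f) ≤ k} q^{kn − |f|} p^{inv(f)} a^{col(f)} = Σ_{n_0+...+n_k = n} q^{Σ_j n_j (k−j)} · [n̂]_{a[r−1]_{ap},p}! / ([n̂_0]_{a[r−1]_{ap},p}! [n_1]_p! ··· [n_k]_p!). -/

import Mathlib

open Finset

namespace Paper

/-- An element of `G(r,n) = ℤ_r ≀ S_n`: a pair (underlying permutation, color vector). -/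
abbrev CPerm (r n : ℕ) := Equiv.Perm (Fin n) × (Fin n → Fin r)

/-- A colored sequence: values and colors. -/
abbrev CSeq (r n : ℕ) := (Fin n → ℕ) × (Fin n → Fin r)

variable {r n : ℕ}

/-- The order on colored integers (value, color):
`n^{r-1} < ⋯ < n^1 < ⋯ < 1^{r-1} < ⋯ < 1^1 < 0 < 1 < ⋯ < n`.
`clt a b` means `a < b`. -/
def clt (a b : ℕ × ℕ) : Prop :=
  (0 < a.2 ∧ b.2 = 0) ∨
  (0 < a.2 ∧ 0 < b.2 ∧ (b.1 < a.1 ∨ (a.1 = b.1 ∧ b.2 < a.2))) ∨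
  (a.2 = 0 ∧ b.2 = 0 ∧ a.1 < b.1)

instance (a b : ℕ × ℕ) : Decidable (clt a b) := by unfold clt; exact inferInstance

/-- The colored entry of `γ` at (0-based) position `i`: value `σ(i)` (1-based) with its color. -/
def entry (γ : CPerm r n) (i : Fin n) : ℕ × ℕ := ((γ.1 i : ℕ) + 1, (γ.2 i : ℕ))

/-- Window value `γ(i)` for `i ∈ [0,n]` (1-based positions), with `γ(0) := 0`. -/
def wval (γ : CPerm r n) (i : ℕ) : ℕ × ℕ :=
  if h : 1 ≤ i ∧ i ≤ n then ((γ.1 ⟨i - 1, by omega⟩ : ℕ) + 1, (γ.2 ⟨i - 1, by omega⟩ : ℕ))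
  else (0, 0)

/-- Descent set `Des_G(γ) = {i ∈ [0,n-1] : γ(i) > γ(i+1)}`, with `γ(0) := 0`. -/
def DesG (γ : CPerm r n) : Finset ℕ :=
  (range n).filter fun i => clt (wval γ (i + 1)) (wval γ i)

def desG (γ : CPerm r n) : ℕ := (DesG γ).card

def majG (γ : CPerm r n) : ℕ := ∑ i ∈ DesG γ, i

def colG (γ : CPerm r n) : ℕ := ∑ i, (γ.2 i : ℕ)

/-- Number of inversions: pairs `i < j` with `γ(i) > γ(j)` in the colored order. -/
def invG (γ : CPerm r n) : ℕ :=
  ((univ : Finset (Fin n × Fin n)).filter fun p =>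
    p.1 < p.2 ∧ clt (entry γ p.2) (entry γ p.1)).card

/-- Length `ℓ_G(γ) = inv(γ) + Σ_{c_i ≠ 0} (σ(i) + c_i - 1)` (σ(i) 1-based). -/
def lenG (γ : CPerm r n) : ℕ :=
  invG γ + ∑ i ∈ univ.filter (fun i => (γ.2 i : ℕ) ≠ 0), ((γ.1 i : ℕ) + (γ.2 i : ℕ))

/-- Membership in `N_0^{(r,n)}`: a zero value has color 0. -/
def ValidSeq (f : CSeq r n) : Prop := ∀ i, f.1 i = 0 → (f.2 i : ℕ) = 0

/-- The defining property of `π(f) = γ = (c;σ)`: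
`f_{σ(1)} ≤ … ≤ f_{σ(n)}`, `c_i(γ) = c_{σ(i)}(f)`, and `γ(i) < γ(i+1)` whenever
`f_{σ(i)} = f_{σ(i+1)}`. -/
def isPi (f : CSeq r n) (γ : CPerm r n) : Prop :=
  (∀ i j : Fin n, i ≤ j → f.1 (γ.1 i) ≤ f.1 (γ.1 j)) ∧
  (∀ i, γ.2 i = f.2 (γ.1 i)) ∧
  (∀ i j : Fin n, (i : ℕ) + 1 = (j : ℕ) → f.1 (γ.1 i) = f.1 (γ.1 j) →
    clt (entry γ i) (entry γ j))

def maxf (f : CSeq r n) : ℕ := univ.sup f.1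

def sumf (f : CSeq r n) : ℕ := ∑ i, f.1 i

/-- The partition `λ(f)` (relative to `γ = π(f)`), with values in `ℤ`:
`λ_i = f_{σ(i)} - #{j ∈ Des_G(γ) : j ≤ i-1}` (1-based `i`). -/
def lamZ (f : CSeq r n) (γ : CPerm r n) (i : Fin n) : ℤ :=
  (f.1 (γ.1 i) : ℤ) - ((DesG γ).filter (· ≤ (i : ℕ))).card

/-- 1-based reading of an `n`-tuple, with value `0` at index `0` (and outside `[1,n]`). -/
def mval (μ : Fin n → ℕ) (i : ℕ) : ℕ :=
  if h : 1 ≤ i ∧ i ≤ n then μ ⟨i - 1, by omega⟩ else 0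

/-- `μ` is `γ`-compatible: `μ_i < μ_{i+1}` for all `i ∈ Des_G(γ)` (with `μ_0 := 0`). -/
def compat (μ : Fin n → ℕ) (γ : CPerm r n) : Prop :=
  ∀ i ∈ DesG γ, mval μ i < mval μ (i + 1)

/-- The skew inverse `γ̃⁻¹ = (c_{σ⁻¹(1)},…,c_{σ⁻¹(n)}; σ⁻¹)`. -/
def skewInv (γ : CPerm r n) : CPerm r n := (γ.1⁻¹, fun i => γ.2 (γ.1⁻¹ i))

/-- The group inverse: `γ⁻¹ = (c'; σ⁻¹)` with `c'_i = (r - c_{σ⁻¹(i)}) mod r`. -/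
def cinv (γ : CPerm r n) : CPerm r n :=
  (γ.1⁻¹, fun i =>
    ⟨(r - (γ.2 (γ.1⁻¹ i) : ℕ)) % r,
      Nat.mod_lt _ (Nat.lt_of_le_of_lt (Nat.zero_le _) (γ.2 (γ.1⁻¹ i)).isLt)⟩)

/-- The group law of `G(r,n)`: `(c;σ)·(d;τ) = ((d_i + c_{τ(i)}) mod r; στ)`. -/
def cmul (x y : CPerm r n) : CPerm r n :=
  (x.1 * y.1, fun i =>
    ⟨((y.2 i : ℕ) + (x.2 (y.1 i) : ℕ)) % r,
      Nat.mod_lt _ (Nat.lt_of_le_of_lt (Nat.zero_le _) (y.2 i).isLt)⟩)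

/-- The color-forgetting projection `φ : G(r,n) → B_n = G(2,n)`. -/
def phi (γ : CPerm r n) : CPerm 2 n := (γ.1, fun i => ⟨min (γ.2 i : ℕ) 1, by omega⟩)

/-- `[m]_p = 1 + p + ⋯ + p^{m-1}`. -/
def qint {R : Type*} [CommRing R] (p : R) (m : ℕ) : R := ∑ j ∈ range m, p ^ j

/-- `[m]_p! = [1]_p [2]_p ⋯ [m]_p`. -/
def qfact {R : Type*} [CommRing R] (p : R) (m : ℕ) : R := ∏ j ∈ range m, qint p (j + 1)

/-- `[m̂]_{b,p}! = (1+bp)(1+bp²)⋯(1+bp^m)·[m]_p!`. -/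
def hqfact {R : Type*} [CommRing R] (b p : R) (m : ℕ) : R :=
  (∏ i ∈ range m, (1 + b * p ^ (i + 1))) * qfact p m

/-- A formal power series in two variables `X 0, X 1` from its coefficients. -/
def seriesOf2 (F : ℕ → ℕ → ℚ) : MvPowerSeries (Fin 2) ℚ := fun d => F (d 0) (d 1)

/-- A formal power series in three variables from its coefficients. -/
def seriesOf3 (F : ℕ → ℕ → ℕ → ℚ) : MvPowerSeries (Fin 3) ℚ := fun d => F (d 0) (d 1) (d 2)



-- ===== algebra =====
section Algebra
variable {R : Type*} [CommRing R] (b p : R)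

lemma qint_add (x y : ℕ) : qint p (x + y) = qint p x + p ^ x * qint p y := by
  unfold qint
  rw [Finset.sum_range_add, Finset.mul_sum]
  exact congrArg _ (Finset.sum_congr rfl fun i _ => (pow_add p x i))

lemma qint_zero : qint p 0 = 0 := by simp [qint]

lemma qfact_succ (m : ℕ) : qfact p (m + 1) = qfact p m * qint p (m + 1) := by
  unfold qfact; rw [Finset.prod_range_succ]

lemma hqfact_succ (m : ℕ) :
    hqfact b p (m + 1) = hqfact b p m * ((1 + b * p ^ (m + 1)) * qint p (m + 1)) := by
  unfold hqfact; rw [Finset.prod_range_succ, qfact_succ]; ring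

lemma hqfact_zero : hqfact b p 0 = 1 := by simp [hqfact, qfact]

def Gsum {k : ℕ} (v : Fin (k + 1) → ℕ) (j : Fin (k + 1)) : ℕ :=
  ∑ l : Fin (k + 1), if j < l then v l else 0
def Lsum {k : ℕ} (v : Fin (k + 1) → ℕ) (j : Fin (k + 1)) : ℕ :=
  ∑ l : Fin (k + 1), if l < j then v l else 0

lemma Gsum_castSucc {k : ℕ} (v : Fin (k + 2) → ℕ) (j : Fin (k + 1)) :
    Gsum v j.castSucc = Gsum (v ∘ Fin.castSucc) j + v (Fin.last (k + 1)) := by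
  unfold Gsum
  rw [Fin.sum_univ_castSucc]
  simp [Fin.castSucc_lt_castSucc_iff, Fin.castSucc_lt_last]

lemma Gsum_last {k : ℕ} (v : Fin (k + 2) → ℕ) : Gsum v (Fin.last (k + 1)) = 0 := by
  unfold Gsum
  apply Finset.sum_eq_zero
  intro l _
  simp [Fin.le_last l, not_lt.2 (Fin.le_last l)]

lemma Lsum_castSucc {k : ℕ} (v : Fin (k + 2) → ℕ) (j : Fin (k + 1)) :
    Lsum v j.castSucc = Lsum (v ∘ Fin.castSucc) j := by
  unfold Lsum
  rw [Fin.sum_univ_castSucc]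
  simp [Fin.castSucc_lt_castSucc_iff, not_lt.2 (Fin.le_last _), Fin.le_last,
    (Fin.castSucc_lt_last j).not_gt]

lemma Lsum_last {k : ℕ} (v : Fin (k + 2) → ℕ) :
    Lsum v (Fin.last (k + 1)) = ∑ j : Fin (k + 1), v j.castSucc := by
  unfold Lsum
  rw [Fin.sum_univ_castSucc]
  simp [Fin.castSucc_lt_last]

lemma teleA : ∀ (k : ℕ) (v : Fin (k + 1) → ℕ),
    ∑ j : Fin (k + 1), p ^ Gsum v j * qint p (v j) = qint p (∑ j, v j) := by
  intro k
  induction k with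
  | zero =>
    intro v
    rw [Fin.sum_univ_one, Fin.sum_univ_one]
    have : Gsum v 0 = 0 := by
      unfold Gsum; rw [Fin.sum_univ_one]; simp
    rw [this]; simp
  | succ k ih =>
    intro v
    rw [Fin.sum_univ_castSucc (f := fun j => p ^ Gsum v j * qint p (v j)),
      Fin.sum_univ_castSucc (f := v), Gsum_last]
    simp only [Gsum_castSucc, pow_zero, one_mul]
    have : ∑ j : Fin (k + 1), p ^ (Gsum (v ∘ Fin.castSucc) j + v (Fin.last (k + 1))) *
        qint p (v j.castSucc)
        = p ^ (v (Fin.last (k + 1))) * ∑ j : Fin (k + 1),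
            p ^ (Gsum (v ∘ Fin.castSucc) j) * qint p ((v ∘ Fin.castSucc) j) := by
      rw [Finset.mul_sum]
      exact Finset.sum_congr rfl fun j _ => by
        rw [pow_add]; simp only [Function.comp_apply]; ring
    rw [this, ih, add_comm (∑ i : Fin (k+1), v i.castSucc), qint_add]
    simp only [Function.comp_apply]
    ring
  
lemma teleB : ∀ (k : ℕ) (v : Fin (k + 1) → ℕ),
    ∑ j : Fin (k + 1), p ^ Lsum v j * qint p (v j) = qint p (∑ j, v j) := by
  intro k
  induction k with
  | zero =>
    intro v
    rw [Fin.sum_univ_one, Fin.sum_univ_one]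
    have : Lsum v 0 = 0 := by
      unfold Lsum; rw [Fin.sum_univ_one]; simp
    rw [this]; simp
  | succ k ih =>
    intro v
    rw [Fin.sum_univ_castSucc (f := fun j => p ^ Lsum v j * qint p (v j)),
      Fin.sum_univ_castSucc (f := v), Lsum_last]
    simp only [Lsum_castSucc]
    have : ∑ x : Fin (k + 1), p ^ Lsum (v ∘ Fin.castSucc) x * qint p (v x.castSucc)
        = ∑ x : Fin (k + 1), p ^ Lsum (v ∘ Fin.castSucc) x * qint p ((v ∘ Fin.castSucc) x) :=
      Finset.sum_congr rfl fun x _ => rfl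
    rw [this, ih (v ∘ Fin.castSucc), qint_add]
    simp only [Function.comp_apply]

lemma Lsum_zero {k : ℕ} (v : Fin (k + 1) → ℕ) : Lsum v 0 = 0 := by
  unfold Lsum
  exact Finset.sum_eq_zero fun l _ => by simp [Fin.not_lt_zero]

lemma Gsum_zero_add {k : ℕ} (v : Fin (k + 1) → ℕ) : Gsum v 0 + v 0 = ∑ l, v l := by
  unfold Gsum
  rw [Fin.sum_univ_succ (f := fun l => if 0 < l then v l else 0), Fin.sum_univ_succ (f := v)]
  simp [Fin.succ_pos]
  omega

lemma lemmaT (k : ℕ) (v : Fin (k + 1) → ℕ) :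
    ∑ j : Fin (k + 1),
      (p ^ Gsum v j + (if j = 0 then 0 else b * p ^ (Lsum v j + ∑ l, v l))) *
        (if j = 0 then (1 + b * p ^ (v 0)) * qint p (v 0) else qint p (v j))
    = (1 + b * p ^ (∑ l, v l)) * qint p (∑ l, v l) := by
  have hA := teleA p k v
  have hB := teleB p k v
  rw [Fin.sum_univ_succ (f := fun j => p ^ Gsum v j * qint p (v j))] at hA
  rw [Fin.sum_univ_succ (f := fun j => p ^ Lsum v j * qint p (v j)), Lsum_zero,
    pow_zero, one_mul] at hB
  rw [Fin.sum_univ_succ]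
  simp only [if_pos rfl, Fin.succ_ne_zero, if_neg (Fin.succ_ne_zero _), if_true, if_false]
  have hsplit : ∑ j : Fin k, (p ^ Gsum v j.succ + b * p ^ (Lsum v j.succ + ∑ l, v l)) *
      qint p (v j.succ)
      = (∑ j : Fin k, p ^ Gsum v j.succ * qint p (v j.succ)) +
        b * p ^ (∑ l, v l) * ∑ j : Fin k, p ^ Lsum v j.succ * qint p (v j.succ) := by
    rw [Finset.mul_sum, ← Finset.sum_add_distrib]
    exact Finset.sum_congr rfl fun j _ => by rw [pow_add]; ring
  rw [hsplit]
  have hG0 : p ^ Gsum v 0 * p ^ (v 0) = p ^ (∑ l, v l) := by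
    rw [← pow_add, Gsum_zero_add]
  linear_combination hA + b * p ^ (∑ l, v l) * hB + b * (qint p (v 0)) * hG0

section CC
open MvPolynomial

lemma cc_qint (m : ℕ) :
    constantCoeff (qint (X 1 : MvPolynomial (Fin 3) ℚ) m) = if m = 0 then 0 else 1 := by
  unfold qint
  rw [map_sum]
  have : ∀ j ∈ range m, constantCoeff ((X 1 : MvPolynomial (Fin 3) ℚ) ^ j) = (0:ℚ) ^ j :=
    fun j _ => by rw [map_pow, constantCoeff_X]
  rw [Finset.sum_congr rfl this]
  cases m with
  | zero => simp
  | succ m => rw [Finset.sum_range_succ']; simp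

lemma cc_qfact (m : ℕ) :
    constantCoeff (qfact (X 1 : MvPolynomial (Fin 3) ℚ) m) = 1 := by
  unfold qfact
  rw [map_prod]
  rw [Finset.prod_congr rfl (fun j (_ : j ∈ range m) => cc_qint (j + 1))]
  simp

lemma cc_hqfact (b : MvPolynomial (Fin 3) ℚ) (m : ℕ) :
    constantCoeff (hqfact b (X 1 : MvPolynomial (Fin 3) ℚ) m) = 1 := by
  unfold hqfact
  rw [map_mul, map_prod, cc_qfact, mul_one]
  have : ∀ i ∈ range m, constantCoeff (1 + b * (X 1 : MvPolynomial (Fin 3) ℚ) ^ (i + 1)) = 1 := by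
    intro i _
    rw [map_add, map_one, map_mul, map_pow, constantCoeff_X, zero_pow (Nat.succ_ne_zero i),
      mul_zero, add_zero]
  rw [Finset.prod_congr rfl this]
  simp

lemma qfact_ne_zero (m : ℕ) : qfact (X 1 : MvPolynomial (Fin 3) ℚ) m ≠ 0 := by
  intro h
  have := cc_qfact m
  rw [h, map_zero] at this
  exact zero_ne_one this

lemma hqfact_ne_zero (b : MvPolynomial (Fin 3) ℚ) (m : ℕ) :
    hqfact b (X 1 : MvPolynomial (Fin 3) ℚ) m ≠ 0 := by
  intro h
  have := cc_hqfact b m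
  rw [h, map_zero] at this
  exact zero_ne_one this

end CC

end Algebra

-- ===== bridge development =====

lemma clt_trans {a b c : ℕ × ℕ} (h1 : clt a b) (h2 : clt b c) : clt a c := by
  obtain ⟨a1, a2⟩ := a; obtain ⟨b1, b2⟩ := b; obtain ⟨c1, c2⟩ := c
  unfold clt at *
  simp only at *
  omega

lemma clt_asymm {a b : ℕ × ℕ} (h1 : clt a b) : ¬ clt b a := by
  obtain ⟨a1, a2⟩ := a; obtain ⟨b1, b2⟩ := b
  unfold clt at *
  simp only at *
  omega

/-- intrinsic inversion condition on positions `s < t` -/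
def condI (f : CSeq r n) (s t : Fin n) : Prop :=
  ((f.2 t : ℕ) = 0 ∧ f.1 t < f.1 s) ∨ ((f.2 t : ℕ) ≠ 0 ∧ f.1 s < f.1 t)

instance (f : CSeq r n) (s t : Fin n) : Decidable (condI f s t) := by
  unfold condI; exact inferInstance

def IstatN (f : CSeq r n) : ℕ :=
  ((univ : Finset (Fin n × Fin n)).filter fun st => st.1 < st.2 ∧ condI f st.1 st.2).card

def CstatN (f : CSeq r n) : ℕ :=
  ∑ t : Fin n, if (f.2 t : ℕ) ≠ 0 then (t : ℕ) + (f.2 t : ℕ) else 0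

/-- within an equal-value run, entries ascend in `clt` -/
lemma run_asc (f : CSeq r n) (γ : CPerm r n) (h : isPi f γ) :
    ∀ (d : ℕ) (i j : Fin n), (j : ℕ) = (i : ℕ) + d + 1 →
      f.1 (γ.1 i) = f.1 (γ.1 j) → clt (entry γ i) (entry γ j) := by
  intro d
  induction d with
  | zero =>
    intro i j hij hf
    exact h.2.2 i j (by omega) hf
  | succ d ih =>
    intro i j hij hf
    have hjn : (j : ℕ) < n := j.isLt
    set m : Fin n := ⟨(i : ℕ) + d + 1, by omega⟩ with hm
    have h1 : f.1 (γ.1 i) ≤ f.1 (γ.1 m) := h.1 i m (by simp [hm, Fin.le_def]; omega)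
    have h2 : f.1 (γ.1 m) ≤ f.1 (γ.1 j) := h.1 m j (by simp [hm, Fin.le_def]; omega)
    have hfm : f.1 (γ.1 i) = f.1 (γ.1 m) := le_antisymm h1 (hf ▸ h2)
    have hfm2 : f.1 (γ.1 m) = f.1 (γ.1 j) := by omega
    exact clt_trans (ih i m (by simp [hm]) hfm) (h.2.2 m j (by simp [hm]; omega) hfm2)

/-- the crux case analysis -/
lemma crux (f : CSeq r n) (γ : CPerm r n) (h : isPi f γ) (i j : Fin n) (hij : i < j) :
    clt (entry γ j) (entry γ i) ↔
      ((γ.1 i < γ.1 j ∧ condI f (γ.1 i) (γ.1 j)) ∨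
       (γ.1 j < γ.1 i ∧ condI f (γ.1 j) (γ.1 i))) := by
  have hle : f.1 (γ.1 i) ≤ f.1 (γ.1 j) := h.1 i j (le_of_lt hij)
  have hne : (γ.1 i : ℕ) ≠ (γ.1 j : ℕ) := by
    intro hc
    exact absurd (γ.1.injective (Fin.ext hc)) (Fin.ne_of_lt hij)
  rcases eq_or_lt_of_le hle with heq | hlt
  · -- equal values: no inversion, no cond
    constructor
    · intro hc
      exact absurd hc (clt_asymm (run_asc f γ h ((j : ℕ) - (i : ℕ) - 1) i j (by
        have := hij; rw [Fin.lt_def] at this; omega) heq))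
    · rintro (⟨_, hcond⟩ | ⟨_, hcond⟩) <;>
      · unfold condI at hcond; omega
  · -- strict: pure arithmetic
    have hc2i : γ.2 i = f.2 (γ.1 i) := h.2.1 i
    have hc2j : γ.2 j = f.2 (γ.1 j) := h.2.1 j
    unfold entry condI clt
    rw [hc2i, hc2j]
    simp only [Fin.lt_def]
    omega

lemma invG_eq_IstatN (f : CSeq r n) (γ : CPerm r n) (h : isPi f γ) : invG γ = IstatN f := by
  unfold invG IstatN
  apply Finset.card_bij'
    (i := fun st _ => if γ.1 st.1 < γ.1 st.2 then (γ.1 st.1, γ.1 st.2) else (γ.1 st.2, γ.1 st.1))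
    (j := fun st _ => if γ.1⁻¹ st.1 < γ.1⁻¹ st.2 then (γ.1⁻¹ st.1, γ.1⁻¹ st.2)
      else (γ.1⁻¹ st.2, γ.1⁻¹ st.1))
  · -- maps to
    intro ⟨i, j⟩ hmem
    rw [Finset.mem_filter] at hmem
    obtain ⟨-, hij, hclt⟩ := hmem
    rw [Finset.mem_filter]
    rw [crux f γ h i j hij] at hclt
    rcases hclt with ⟨hlt, hcond⟩ | ⟨hlt, hcond⟩
    · rw [if_pos hlt]; exact ⟨Finset.mem_univ _, hlt, hcond⟩
    · rw [if_neg (not_lt.2 (le_of_lt hlt))]; exact ⟨Finset.mem_univ _, hlt, hcond⟩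
  · -- inverse maps to
    intro ⟨s, t⟩ hmem
    rw [Finset.mem_filter] at hmem
    obtain ⟨-, hst, hcond⟩ := hmem
    rw [Finset.mem_filter]
    have hne : γ.1⁻¹ s ≠ γ.1⁻¹ t := fun hc => absurd (congrArg γ.1 hc)
      (by simp only [Equiv.Perm.coe_inv, Equiv.apply_symm_apply]; exact fun h2 => absurd h2 (Fin.ne_of_lt hst))
    rcases lt_or_gt_of_ne hne with hlt | hgt
    · rw [if_pos hlt]
      refine ⟨Finset.mem_univ _, hlt, ?_⟩
      rw [crux f γ h _ _ hlt]
      left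
      simp only [Equiv.Perm.coe_inv, Equiv.apply_symm_apply]
      exact ⟨hst, hcond⟩
    · rw [if_neg (not_lt.2 (le_of_lt hgt))]
      refine ⟨Finset.mem_univ _, hgt, ?_⟩
      rw [crux f γ h _ _ hgt]
      right
      simp only [Equiv.Perm.coe_inv, Equiv.apply_symm_apply]
      exact ⟨hst, hcond⟩
  · -- left inverse
    intro ⟨i, j⟩ hmem
    rw [Finset.mem_filter] at hmem
    obtain ⟨-, hij, -⟩ := hmem
    by_cases hlt : γ.1 i < γ.1 j
    · rw [if_pos hlt]
      simp only [Equiv.Perm.coe_inv, Equiv.symm_apply_apply]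
      rw [if_pos hij]
    · rw [if_neg hlt]
      simp only [Equiv.Perm.coe_inv, Equiv.symm_apply_apply]
      rw [if_neg (not_lt.2 (le_of_lt hij))]
  · -- right inverse
    intro ⟨s, t⟩ hmem
    rw [Finset.mem_filter] at hmem
    obtain ⟨-, hst, -⟩ := hmem
    by_cases hlt : γ.1⁻¹ s < γ.1⁻¹ t
    · rw [if_pos hlt]
      simp only [Equiv.Perm.coe_inv, Equiv.apply_symm_apply]
      rw [if_pos hst]
    · rw [if_neg hlt]
      simp only [Equiv.Perm.coe_inv, Equiv.apply_symm_apply]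
      rw [if_neg (not_lt.2 (le_of_lt hst))]

lemma lenG_eq (f : CSeq r n) (γ : CPerm r n) (h : isPi f γ) :
    lenG γ = IstatN f + CstatN f := by
  unfold lenG
  rw [invG_eq_IstatN f γ h]
  congr 1
  unfold CstatN
  rw [Finset.sum_filter]
  rw [← Equiv.sum_comp γ.1 (fun t => if (f.2 t : ℕ) ≠ 0 then (t : ℕ) + (f.2 t : ℕ) else 0)]
  apply Finset.sum_congr rfl
  intro i _
  rw [h.2.1 i]

lemma colG_eq (f : CSeq r n) (γ : CPerm r n) (h : isPi f γ) :
    colG γ = ∑ t, (f.2 t : ℕ) := by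
  unfold colG
  rw [← Equiv.sum_comp γ.1 (fun t => (f.2 t : ℕ))]
  exact Finset.sum_congr rfl fun i _ => by rw [h.2.1 i]

-- ===== bounded sequences =====

abbrev BS (r k m : ℕ) := (Fin m → Fin (k + 1)) × (Fin m → Fin r)

def emb {r k m : ℕ} (g : BS r k m) : CSeq r m := (fun i => ((g.1 i : ℕ)), g.2)

def validB {r k m : ℕ} (g : BS r k m) : Prop := ∀ i, (g.1 i : ℕ) = 0 → (g.2 i : ℕ) = 0

instance {r k m : ℕ} (g : BS r k m) : Decidable (validB g) := by
  unfold validB; exact inferInstance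

def cntB {r k m : ℕ} (g : BS r k m) (j : Fin (k + 1)) : ℕ :=
  ∑ i, if g.1 i = j then 1 else 0

def colB {r k m : ℕ} (g : BS r k m) : ℕ := ∑ t, (g.2 t : ℕ)

def snoc2 {r k m : ℕ} (g : BS r k m) (x : Fin (k + 1) × Fin r) : BS r k (m + 1) :=
  (Fin.snoc g.1 x.1, Fin.snoc g.2 x.2)

def snocEquiv (r k m : ℕ) : BS r k m × (Fin (k + 1) × Fin r) ≃ BS r k (m + 1) where
  toFun z := snoc2 z.1 z.2
  invFun h := ((h.1 ∘ Fin.castSucc, h.2 ∘ Fin.castSucc), (h.1 (Fin.last m), h.2 (Fin.last m)))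
  left_inv z := by
    obtain ⟨⟨g1, g2⟩, ⟨x1, x2⟩⟩ := z
    simp [snoc2]
  right_inv h := by
    obtain ⟨h1, h2⟩ := h
    simp [snoc2]
    constructor <;> (funext i; induction i using Fin.lastCases <;> simp)

lemma sum_BS_succ {M : Type*} [AddCommMonoid M] {r k m : ℕ} (φ : BS r k (m + 1) → M) :
    ∑ g : BS r k (m + 1), φ g
      = ∑ x : Fin (k + 1) × Fin r, ∑ g : BS r k m, φ (snoc2 g x) := by
  rw [← Equiv.sum_comp (snocEquiv r k m) φ]
  rw [Fintype.sum_prod_type]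
  rw [Finset.sum_comm]
  rfl

lemma validB_snoc {r k m : ℕ} (g : BS r k m) (x : Fin (k + 1) × Fin r) :
    validB (snoc2 g x) ↔ (validB g ∧ ((x.1 : ℕ) = 0 → (x.2 : ℕ) = 0)) := by
  unfold validB snoc2
  constructor
  · intro h
    refine ⟨fun i hi => ?_, fun h0 => ?_⟩
    · have := h i.castSucc
      simp only [Fin.snoc_castSucc] at this
      exact this hi
    · have := h (Fin.last m)
      simp only [Fin.snoc_last] at this
      exact this h0
  · intro ⟨h1, h2⟩ i hi
    induction i using Fin.lastCases with
    | last => simpa using h2 (by simpa using hi)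
    | cast i => simpa using h1 i (by simpa using hi)

lemma cntB_snoc {r k m : ℕ} (g : BS r k m) (x : Fin (k + 1) × Fin r) (l : Fin (k + 1)) :
    cntB (snoc2 g x) l = cntB g l + (if x.1 = l then 1 else 0) := by
  unfold cntB snoc2
  rw [Fin.sum_univ_castSucc]
  simp

lemma colB_snoc {r k m : ℕ} (g : BS r k m) (x : Fin (k + 1) × Fin r) :
    colB (snoc2 g x) = colB g + (x.2 : ℕ) := by
  unfold colB snoc2
  rw [Fin.sum_univ_castSucc]
  simp

lemma CstatN_snoc {r k m : ℕ} (g : BS r k m) (x : Fin (k + 1) × Fin r) :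
    CstatN (emb (snoc2 g x))
      = CstatN (emb g) + (if (x.2 : ℕ) ≠ 0 then m + (x.2 : ℕ) else 0) := by
  unfold CstatN emb snoc2
  rw [Fin.sum_univ_castSucc]
  simp

lemma IstatN_sum {r n : ℕ} (f : CSeq r n) :
    IstatN f = ∑ t : Fin n, ∑ s : Fin n, if (s < t ∧ condI f s t) then 1 else 0 := by
  unfold IstatN
  rw [Finset.card_filter]
  rw [Fintype.sum_prod_type]
  rw [Finset.sum_comm]

lemma IstatN_snoc {r k m : ℕ} (g : BS r k m) (x : Fin (k + 1) × Fin r) :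
    IstatN (emb (snoc2 g x)) = IstatN (emb g) +
      (if (x.2 : ℕ) = 0 then (∑ s : Fin m, if (x.1 : ℕ) < (g.1 s : ℕ) then 1 else 0)
       else (∑ s : Fin m, if (g.1 s : ℕ) < (x.1 : ℕ) then 1 else 0)) := by
  rw [IstatN_sum, IstatN_sum]
  rw [Fin.sum_univ_castSucc
    (f := fun t => ∑ s : Fin (m+1), if (s < t ∧ condI (emb (snoc2 g x)) s t) then 1 else 0)]
  congr 1
  · -- castSucc terms agree with IstatN (emb g) inner sums
    apply Finset.sum_congr rfl
    intro t _
    rw [Fin.sum_univ_castSucc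
      (f := fun s => if (s < t.castSucc ∧ condI (emb (snoc2 g x)) s t.castSucc) then 1 else 0)]
    have hlast : ((if (Fin.last m < t.castSucc ∧
        condI (emb (snoc2 g x)) (Fin.last m) t.castSucc) then 1 else 0) : ℕ) = 0 := by
      rw [if_neg]
      rintro ⟨hc, -⟩
      have := t.isLt
      rw [Fin.lt_def] at hc
      simp at hc
      omega
    rw [hlast, add_zero]
    apply Finset.sum_congr rfl
    intro s _
    have h1 : (s.castSucc < t.castSucc) ↔ (s < t) := Fin.castSucc_lt_castSucc_iff
    have h2 : condI (emb (snoc2 g x)) s.castSucc t.castSucc ↔ condI (emb g) s t := by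
      unfold condI emb snoc2
      simp only [Fin.snoc_castSucc]
    rw [if_congr (and_congr h1 h2) rfl rfl]
  · -- t = last term
    rw [Fin.sum_univ_castSucc
      (f := fun s => if (s < Fin.last m ∧ condI (emb (snoc2 g x)) s (Fin.last m)) then 1 else 0)]
    have hlast : ((if (Fin.last m < Fin.last m ∧
        condI (emb (snoc2 g x)) (Fin.last m) (Fin.last m)) then 1 else 0) : ℕ) = 0 := by
      rw [if_neg]; rintro ⟨hc, -⟩; exact absurd hc (lt_irrefl _)
    rw [hlast, add_zero]
    by_cases hc : (x.2 : ℕ) = 0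
    · rw [if_pos hc]
      apply Finset.sum_congr rfl
      intro s _
      have : (s.castSucc < Fin.last m ∧ condI (emb (snoc2 g x)) s.castSucc (Fin.last m))
          ↔ ((x.1 : ℕ) < (g.1 s : ℕ)) := by
        unfold condI emb snoc2
        simp only [Fin.snoc_castSucc, Fin.snoc_last, Fin.castSucc_lt_last, true_and]
        constructor
        · rintro (⟨-, h⟩ | ⟨hne, -⟩)
          · exact h
          · exact absurd hc hne
        · intro h; exact Or.inl ⟨hc, h⟩
      rw [if_congr this rfl rfl]
    · rw [if_neg hc]
      apply Finset.sum_congr rfl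
      intro s _
      have : (s.castSucc < Fin.last m ∧ condI (emb (snoc2 g x)) s.castSucc (Fin.last m))
          ↔ ((g.1 s : ℕ) < (x.1 : ℕ)) := by
        unfold condI emb snoc2
        simp only [Fin.snoc_castSucc, Fin.snoc_last, Fin.castSucc_lt_last, true_and]
        constructor
        · rintro (⟨h0, -⟩ | ⟨-, h⟩)
          · exact absurd h0 hc
          · exact h
        · intro h; exact Or.inr ⟨hc, h⟩
      rw [if_congr this rfl rfl]

lemma cntGT_eq {r k m : ℕ} (g : BS r k m) (j : Fin (k + 1)) :
    (∑ s : Fin m, if (j : ℕ) < (g.1 s : ℕ) then 1 else 0) = Gsum (cntB g) j := by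
  unfold Gsum cntB
  have step1 : ∀ l : Fin (k + 1),
      (if j < l then (∑ i : Fin m, if g.1 i = l then 1 else 0) else 0)
        = ∑ i : Fin m, if g.1 i = l then (if j < l then 1 else 0) else 0 := by
    intro l
    by_cases h : j < l
    · rw [if_pos h]
      exact Finset.sum_congr rfl fun i _ => by rw [if_pos h]
    · rw [if_neg h]
      symm
      exact Finset.sum_eq_zero fun i _ => by rw [if_neg h, ite_self]
  rw [Finset.sum_congr rfl fun l _ => step1 l, Finset.sum_comm]
  apply Finset.sum_congr rfl
  intro s _
  rw [Finset.sum_ite_eq (Finset.univ) (g.1 s) (fun l => if j < l then (1:ℕ) else 0),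
    if_pos (Finset.mem_univ _)]
  exact if_congr (Iff.symm Fin.lt_def) rfl rfl

lemma cntLT_eq {r k m : ℕ} (g : BS r k m) (j : Fin (k + 1)) :
    (∑ s : Fin m, if (g.1 s : ℕ) < (j : ℕ) then 1 else 0) = Lsum (cntB g) j := by
  unfold Lsum cntB
  have step1 : ∀ l : Fin (k + 1),
      (if l < j then (∑ i : Fin m, if g.1 i = l then 1 else 0) else 0)
        = ∑ i : Fin m, if g.1 i = l then (if l < j then 1 else 0) else 0 := by
    intro l
    by_cases h : l < j
    · rw [if_pos h]
      exact Finset.sum_congr rfl fun i _ => by rw [if_pos h]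
    · rw [if_neg h]
      symm
      exact Finset.sum_eq_zero fun i _ => by rw [if_neg h, ite_self]
  rw [Finset.sum_congr rfl fun l _ => step1 l, Finset.sum_comm]
  apply Finset.sum_congr rfl
  intro s _
  rw [Finset.sum_ite_eq (Finset.univ) (g.1 s) (fun l => if l < j then (1:ℕ) else 0),
    if_pos (Finset.mem_univ _)]
  exact if_congr (Iff.symm Fin.lt_def) rfl rfl

lemma Gsum_sub {k : ℕ} (v : Fin (k + 1) → ℕ) (j : Fin (k + 1)) :
    Gsum (fun l => v l - if l = j then 1 else 0) j = Gsum v j := by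
  unfold Gsum
  apply Finset.sum_congr rfl
  intro l _
  by_cases h : j < l
  · rw [if_pos h, if_pos h]
    show v l - (if l = j then 1 else 0) = v l
    rw [if_neg (Fin.ne_of_gt h), Nat.sub_zero]
  · rw [if_neg h, if_neg h]

lemma Lsum_sub {k : ℕ} (v : Fin (k + 1) → ℕ) (j : Fin (k + 1)) :
    Lsum (fun l => v l - if l = j then 1 else 0) j = Lsum v j := by
  unfold Lsum
  apply Finset.sum_congr rfl
  intro l _
  by_cases h : l < j
  · rw [if_pos h, if_pos h]
    show v l - (if l = j then 1 else 0) = v l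
    rw [if_neg (Fin.ne_of_lt h), Nat.sub_zero]
  · rw [if_neg h, if_neg h]

-- ===== core generating function =====
section Core
open MvPolynomial

noncomputable def bpoly (r : ℕ) : MvPolynomial (Fin 3) ℚ :=
  X 2 * qint (X 2 * X 1) (r - 1)

noncomputable def Dv (r : ℕ) {k : ℕ} (v : Fin (k + 1) → ℕ) : MvPolynomial (Fin 3) ℚ :=
  hqfact (bpoly r) (X 1) (v 0) *
    ∏ j ∈ Finset.univ.filter (fun j : Fin (k + 1) => j ≠ 0), qfact (X 1) (v j)

noncomputable def fiberSum (r k m : ℕ) (v : Fin (k + 1) → ℕ) : MvPolynomial (Fin 3) ℚ :=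
  ∑ g ∈ (Finset.univ : Finset (BS r k m)).filter (fun g => validB g ∧ cntB g = v),
    (X 1) ^ (IstatN (emb g) + CstatN (emb g)) * (X 2) ^ (colB g)

def vsub {k : ℕ} (v : Fin (k + 1) → ℕ) (j : Fin (k + 1)) : Fin (k + 1) → ℕ :=
  fun l => v l - if l = j then 1 else 0

lemma sum_vsub {k : ℕ} (v : Fin (k + 1) → ℕ) (j : Fin (k + 1)) (hj : v j ≠ 0) :
    (∑ l, vsub v j l) + 1 = ∑ l, v l := by
  have h1 : (∑ l, vsub v j l) + (∑ l : Fin (k+1), if l = j then 1 else 0) = ∑ l, v l := by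
    rw [← Finset.sum_add_distrib]
    apply Finset.sum_congr rfl
    intro l _
    unfold vsub
    by_cases h : l = j
    · subst h; rw [if_pos rfl]; omega
    · rw [if_neg h]; omega
  rwa [Finset.sum_ite_eq' Finset.univ j (fun _ => 1), if_pos (Finset.mem_univ _)] at h1

lemma Gsum_vsub {k : ℕ} (v : Fin (k + 1) → ℕ) (j : Fin (k + 1)) :
    Gsum (vsub v j) j = Gsum v j := Gsum_sub v j

lemma Lsum_vsub {k : ℕ} (v : Fin (k + 1) → ℕ) (j : Fin (k + 1)) :
    Lsum (vsub v j) j = Lsum v j := Lsum_sub v j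

lemma Dv_factor (r : ℕ) {k : ℕ} (v : Fin (k + 1) → ℕ) (j : Fin (k + 1)) (hj : v j ≠ 0) :
    Dv r v = Dv r (vsub v j) *
      (if j = 0 then (1 + bpoly r * (X 1) ^ (v 0)) * qint (X 1) (v 0)
       else qint (X 1) (v j)) := by
  unfold Dv vsub
  by_cases h0 : j = 0
  · subst h0
    rw [if_pos rfl]
    have hv0 : v 0 - 1 + 1 = v 0 := Nat.succ_pred_eq_of_ne_zero hj
    have hh : hqfact (bpoly r) (X 1) (v 0)
        = hqfact (bpoly r) (X 1) (v 0 - (if (0 : Fin (k+1)) = 0 then 1 else 0)) *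
          ((1 + bpoly r * (X 1) ^ (v 0)) * qint (X 1) (v 0)) := by
      rw [if_pos rfl]
      conv_lhs => rw [← hv0]
      rw [hqfact_succ, hv0]
    rw [hh]
    have hprod : ∀ l ∈ Finset.univ.filter (fun l : Fin (k + 1) => l ≠ 0),
        qfact (X 1 : MvPolynomial (Fin 3) ℚ) (v l - if l = 0 then 1 else 0)
          = qfact (X 1) (v l) := by
      intro l hl
      rw [Finset.mem_filter] at hl
      rw [if_neg hl.2, Nat.sub_zero]
    rw [Finset.prod_congr rfl hprod]
    simp only [if_true]
    ring
  · rw [if_neg h0]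
    have hmem : j ∈ Finset.univ.filter (fun l : Fin (k + 1) => l ≠ 0) :=
      Finset.mem_filter.2 ⟨Finset.mem_univ _, h0⟩
    rw [← Finset.mul_prod_erase _ _ hmem,
      ← Finset.mul_prod_erase _ (fun l => qfact (X 1 : MvPolynomial (Fin 3) ℚ) (v l - if l = j then 1 else 0)) hmem]
    have hv0' : v 0 - (if (0 : Fin (k+1)) = j then 1 else 0) = v 0 := by
      rw [if_neg (fun h => h0 h.symm), Nat.sub_zero]
    rw [hv0']
    have hvj : v j - 1 + 1 = v j := Nat.succ_pred_eq_of_ne_zero hj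
    have hfj : qfact (X 1 : MvPolynomial (Fin 3) ℚ) (v j - if j = j then 1 else 0) * qint (X 1) (v j)
        = qfact (X 1) (v j) := by
      rw [if_pos rfl]
      conv_rhs => rw [← hvj]
      rw [qfact_succ, hvj]
    have hrest : ∀ l ∈ (Finset.univ.filter (fun l : Fin (k + 1) => l ≠ 0)).erase j,
        qfact (X 1 : MvPolynomial (Fin 3) ℚ) (v l - if l = j then 1 else 0)
          = qfact (X 1) (v l) := by
      intro l hl
      rw [if_neg (Finset.ne_of_mem_erase hl), Nat.sub_zero]
    rw [Finset.prod_congr rfl hrest]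
    rw [← hfj]
    ring

lemma Pj_sum (r : ℕ) (hr : 0 < r) (E L : ℕ) :
    (∑ c : Fin r, (X 1 : MvPolynomial (Fin 3) ℚ) ^ (if (c : ℕ) = 0 then E else L + (c : ℕ))
      * (X 2) ^ (c : ℕ))
    = (X 1) ^ E + bpoly r * (X 1) ^ (L + 1) := by
  obtain ⟨w, rfl⟩ : ∃ w, r = w + 1 := ⟨r - 1, (Nat.succ_pred_eq_of_pos hr).symm⟩
  rw [Fin.sum_univ_eq_sum_range
    (fun i => (X 1 : MvPolynomial (Fin 3) ℚ) ^ (if i = 0 then E else L + i) * (X 2) ^ i)]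
  rw [Finset.sum_range_succ']
  simp only [if_pos rfl, Nat.succ_ne_zero, if_neg (Nat.succ_ne_zero _), pow_zero, mul_one,
    if_true, if_false]
  rw [add_comm]
  congr 1
  unfold bpoly qint
  rw [Nat.add_sub_cancel]
  rw [mul_assoc, Finset.sum_mul, Finset.mul_sum]
  apply Finset.sum_congr rfl
  intro i _
  rw [mul_pow]
  ring

lemma qfact_zero' {R : Type*} [CommRing R] (p : R) : qfact p 0 = 1 := by
  unfold qfact; simp

theorem coreB (r k : ℕ) (hr : 0 < r) :
    ∀ (m : ℕ) (v : Fin (k + 1) → ℕ), (∑ j, v j) = m →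
      fiberSum r k m v * Dv r v = hqfact (bpoly r) (X 1) m := by
  intro m
  induction m with
  | zero =>
    intro v hv
    have hv0 : ∀ j, v j = 0 := by
      intro j
      exact (Finset.sum_eq_zero_iff.1 hv) j (Finset.mem_univ _)
    unfold fiberSum
    have hcond : ∀ g : BS r k 0, validB g ∧ cntB g = v := by
      intro g
      refine ⟨fun i => i.elim0, funext fun j => ?_⟩
      rw [hv0 j]
      unfold cntB
      simp
    rw [Finset.filter_true_of_mem (fun g _ => hcond g)]
    have hone : ∀ g : BS r k 0,
        (X 1 : MvPolynomial (Fin 3) ℚ) ^ (IstatN (emb g) + CstatN (emb g)) * (X 2) ^ colB g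
          = 1 := by
      intro g
      have h1 : IstatN (emb g) = 0 := by rw [IstatN_sum]; simp
      have h2 : CstatN (emb g) = 0 := by unfold CstatN; simp
      have h3 : colB g = 0 := by unfold colB; simp
      rw [h1, h2, h3]
      simp
    rw [Finset.sum_congr rfl (fun g _ => hone g), Finset.sum_const]
    have hcard : (Finset.univ : Finset (BS r k 0)).card = 1 := by
      rw [Finset.card_univ]
      simp [Fintype.card_prod]
    rw [hcard, one_smul]
    unfold Dv
    rw [hv0 0, hqfact_zero]
    have : ∀ j ∈ Finset.univ.filter (fun j : Fin (k + 1) => j ≠ 0),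
        qfact (X 1 : MvPolynomial (Fin 3) ℚ) (v j) = 1 := by
      intro j _
      rw [hv0 j, qfact_zero']
    rw [Finset.prod_congr rfl this, Finset.prod_const_one]
    ring
  | succ m ih =>
    intro v hv
    set p : MvPolynomial (Fin 3) ℚ := X 1 with hp
    set a : MvPolynomial (Fin 3) ℚ := X 2 with ha
    have step1 : fiberSum r k (m + 1) v
        = ∑ x : Fin (k + 1) × Fin r, ∑ g : BS r k m,
            (if (validB (snoc2 g x) ∧ cntB (snoc2 g x) = v) then
              p ^ (IstatN (emb (snoc2 g x)) + CstatN (emb (snoc2 g x))) *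
                a ^ colB (snoc2 g x) else 0) := by
      unfold fiberSum
      rw [Finset.sum_filter]
      exact sum_BS_succ _
    have key : ∀ (x : Fin (k + 1) × Fin r) (g : BS r k m),
        (if (validB (snoc2 g x) ∧ cntB (snoc2 g x) = v) then
          p ^ (IstatN (emb (snoc2 g x)) + CstatN (emb (snoc2 g x))) *
            a ^ colB (snoc2 g x) else 0)
        = if (((x.1 : ℕ) = 0 → (x.2 : ℕ) = 0) ∧ v x.1 ≠ 0) then
            (p ^ (if (x.2 : ℕ) = 0 then Gsum v x.1 else Lsum v x.1 + m + (x.2 : ℕ)) *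
              a ^ (x.2 : ℕ)) *
              (if (validB g ∧ cntB g = vsub v x.1) then
                p ^ (IstatN (emb g) + CstatN (emb g)) * a ^ colB g else 0)
          else 0 := by
      intro x g
      by_cases h1 : ((x.1 : ℕ) = 0 → (x.2 : ℕ) = 0) ∧ v x.1 ≠ 0
      · rw [if_pos h1]
        by_cases h2 : validB g ∧ cntB g = vsub v x.1
        · rw [if_pos h2]
          have hcnt : cntB (snoc2 g x) = v := by
            funext l
            rw [cntB_snoc]
            have hl := congrFun h2.2 l
            unfold vsub at hl
            by_cases hlx : x.1 = l
            · rw [if_pos hlx, hl, if_pos hlx.symm]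
              have : v x.1 ≠ 0 := h1.2
              rw [← hlx] at *
              omega
            · rw [if_neg hlx, hl, if_neg (fun h => hlx h.symm), add_zero, Nat.sub_zero]
          rw [if_pos ⟨(validB_snoc g x).2 ⟨h2.1, h1.1⟩, hcnt⟩]
          rw [IstatN_snoc, CstatN_snoc, colB_snoc]
          have hGT : (∑ s : Fin m, if (x.1 : ℕ) < (g.1 s : ℕ) then 1 else 0) = Gsum v x.1 := by
            rw [cntGT_eq, h2.2, Gsum_vsub]
          have hLT : (∑ s : Fin m, if (g.1 s : ℕ) < (x.1 : ℕ) then 1 else 0) = Lsum v x.1 := by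
            rw [cntLT_eq, h2.2, Lsum_vsub]
          by_cases hc : (x.2 : ℕ) = 0
          · rw [if_pos hc, if_pos hc, if_neg (not_not_intro hc), hGT, hc]
            rw [pow_add, pow_add, pow_add]
            ring
          · rw [if_neg hc, if_neg hc, if_pos hc, hLT]
            rw [pow_add, pow_add, pow_add]
            ring
        · rw [if_neg h2, mul_zero, if_neg]
          rintro ⟨hval, hcnt⟩
          apply h2
          refine ⟨((validB_snoc g x).1 hval).1, funext fun l => ?_⟩
          have hl := congrFun hcnt l
          rw [cntB_snoc] at hl
          unfold vsub
          by_cases hlx : l = x.1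
          · rw [if_pos hlx]
            rw [if_pos hlx.symm] at hl
            omega
          · rw [if_neg hlx]
            rw [if_neg (fun h => hlx h.symm)] at hl
            omega
      · rw [if_neg h1, if_neg]
        rintro ⟨hval, hcnt⟩
        apply h1
        constructor
        · exact ((validB_snoc g x).1 hval).2
        · have hl := congrFun hcnt x.1
          rw [cntB_snoc, if_pos rfl] at hl
          omega
    have step3 : ∀ x : Fin (k + 1) × Fin r,
        (∑ g : BS r k m,
          (if (((x.1 : ℕ) = 0 → (x.2 : ℕ) = 0) ∧ v x.1 ≠ 0) then
            (p ^ (if (x.2 : ℕ) = 0 then Gsum v x.1 else Lsum v x.1 + m + (x.2 : ℕ)) *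
              a ^ (x.2 : ℕ)) *
              (if (validB g ∧ cntB g = vsub v x.1) then
                p ^ (IstatN (emb g) + CstatN (emb g)) * a ^ colB g else 0)
          else 0))
        = if (((x.1 : ℕ) = 0 → (x.2 : ℕ) = 0) ∧ v x.1 ≠ 0) then
            (p ^ (if (x.2 : ℕ) = 0 then Gsum v x.1 else Lsum v x.1 + m + (x.2 : ℕ)) *
              a ^ (x.2 : ℕ)) * fiberSum r k m (vsub v x.1)
          else 0 := by
      intro x
      by_cases h1 : ((x.1 : ℕ) = 0 → (x.2 : ℕ) = 0) ∧ v x.1 ≠ 0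
      · rw [if_pos h1]
        rw [Finset.sum_congr rfl (fun g (_ : g ∈ Finset.univ) => if_pos h1)]
        rw [← Finset.mul_sum]
        congr 1
        unfold fiberSum
        rw [Finset.sum_filter]
      · rw [if_neg h1]
        rw [Finset.sum_congr rfl (fun g (_ : g ∈ Finset.univ) => if_neg h1)]
        exact Finset.sum_const_zero
    have step5 : ∀ j : Fin (k + 1),
        (∑ c : Fin r,
          if (((j : ℕ) = 0 → (c : ℕ) = 0) ∧ v j ≠ 0) then
            (p ^ (if (c : ℕ) = 0 then Gsum v j else Lsum v j + m + (c : ℕ)) * a ^ (c : ℕ)) *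
              fiberSum r k m (vsub v j)
          else 0)
        = (if v j = 0 then 0 else
            (p ^ Gsum v j + (if j = 0 then 0 else bpoly r * p ^ (Lsum v j + (m + 1)))) *
              fiberSum r k m (vsub v j)) := by
      intro j
      by_cases hvj : v j = 0
      · rw [if_pos hvj]
        apply Finset.sum_eq_zero
        intro c _
        rw [if_neg]
        rintro ⟨-, h⟩
        exact h hvj
      · rw [if_neg hvj]
        by_cases hj : j = 0
        · subst hj
          rw [if_pos rfl]
          have hstep : ∀ c : Fin r,
              (if ((((0 : Fin (k+1)) : ℕ) = 0 → (c : ℕ) = 0) ∧ v 0 ≠ 0) then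
                (p ^ (if (c : ℕ) = 0 then Gsum v 0 else Lsum v 0 + m + (c : ℕ)) * a ^ (c : ℕ)) *
                  fiberSum r k m (vsub v 0)
              else 0)
              = if (c : ℕ) = 0 then (p ^ Gsum v 0) * fiberSum r k m (vsub v 0) else 0 := by
            intro c
            by_cases hc : (c : ℕ) = 0
            · rw [if_pos hc, if_pos ⟨fun _ => hc, hvj⟩, if_pos hc, hc, pow_zero, mul_one]
            · have hL : ¬(((((0 : Fin (k+1)) : ℕ)) = 0 → (c : ℕ) = 0) ∧ v 0 ≠ 0) := by
                rintro ⟨himp, -⟩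
                exact hc (himp rfl)
              rw [if_neg hL, if_neg hc]
          rw [Finset.sum_congr rfl (fun c _ => hstep c)]
          rw [Fin.sum_univ_eq_sum_range
            (fun i => if i = 0 then (p ^ Gsum v 0) * fiberSum r k m (vsub v 0) else 0)]
          obtain ⟨w, rfl⟩ : ∃ w, r = w + 1 := ⟨r - 1, (Nat.succ_pred_eq_of_pos hr).symm⟩
          rw [Finset.sum_range_succ']
          simp
        · rw [if_neg hj]
          have hjv : (j : ℕ) ≠ 0 := fun h => hj (Fin.ext h)
          have hstep : ∀ c : Fin r,
              (if (((j : ℕ) = 0 → (c : ℕ) = 0) ∧ v j ≠ 0) then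
                (p ^ (if (c : ℕ) = 0 then Gsum v j else Lsum v j + m + (c : ℕ)) * a ^ (c : ℕ)) *
                  fiberSum r k m (vsub v j)
              else 0)
              = (p ^ (if (c : ℕ) = 0 then Gsum v j else (Lsum v j + m) + (c : ℕ)) * a ^ (c : ℕ)) *
                  fiberSum r k m (vsub v j) := by
            intro c
            rw [if_pos ⟨fun h => absurd h hjv, hvj⟩]
          rw [Finset.sum_congr rfl (fun c _ => hstep c), ← Finset.sum_mul]
          rw [Pj_sum r hr (Gsum v j) (Lsum v j + m)]
          rw [add_assoc (Lsum v j) m 1]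
    rw [step1, Finset.sum_congr rfl (fun x _ =>
      (Finset.sum_congr rfl (fun g (_ : g ∈ Finset.univ) => key x g)).trans (step3 x))]
    rw [Fintype.sum_prod_type]
    rw [Finset.sum_congr rfl (fun j (_ : j ∈ Finset.univ) => step5 j)]
    rw [Finset.sum_mul]
    have hterm : ∀ j : Fin (k + 1),
        (if v j = 0 then 0 else
          (p ^ Gsum v j + (if j = 0 then 0 else bpoly r * p ^ (Lsum v j + (m + 1)))) *
            fiberSum r k m (vsub v j)) * Dv r v
        = ((p ^ Gsum v j + (if j = 0 then 0 else bpoly r * p ^ (Lsum v j + ∑ l, v l))) *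
            (if j = 0 then (1 + bpoly r * p ^ (v 0)) * qint p (v 0) else qint p (v j))) *
            hqfact (bpoly r) p m := by
      intro j
      by_cases hvj : v j = 0
      · rw [if_pos hvj, zero_mul]
        by_cases hj : j = 0
        · rw [if_pos hj, if_pos hj]
          rw [hj] at hvj
          rw [hvj, qint_zero]
          ring
        · rw [if_neg hj, if_neg hj, hvj, qint_zero]
          ring
      · rw [if_neg hvj, hv]
        have hsum : (∑ l, vsub v j l) = m := by
          have := sum_vsub v j hvj
          omega
        have hIH := ih (vsub v j) hsum
        rw [Dv_factor r v j hvj]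
        calc ((p ^ Gsum v j + (if j = 0 then 0 else bpoly r * p ^ (Lsum v j + (m + 1)))) *
                fiberSum r k m (vsub v j)) *
              (Dv r (vsub v j) *
                (if j = 0 then (1 + bpoly r * p ^ (v 0)) * qint p (v 0) else qint p (v j)))
            = ((p ^ Gsum v j + (if j = 0 then 0 else bpoly r * p ^ (Lsum v j + (m + 1)))) *
                (if j = 0 then (1 + bpoly r * p ^ (v 0)) * qint p (v 0) else qint p (v j))) *
                (fiberSum r k m (vsub v j) * Dv r (vsub v j)) := by ring
          _ = _ := by rw [hIH]
    rw [Finset.sum_congr rfl (fun j _ => hterm j)]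
    rw [← Finset.sum_mul]
    rw [lemmaT (bpoly r) p k v, hv, hqfact_succ]
    ring
lemma emb_injective {r k m : ℕ} : Function.Injective (emb : BS r k m → CSeq r m) := by
  intro g g' h
  obtain ⟨h1, h2⟩ := Prod.mk.injEq _ _ _ _ ▸ h
  have e1 : g.1 = g'.1 := funext fun i => Fin.ext (congrFun h1 i)
  exact Prod.ext e1 h2

lemma cnt_total {r k m : ℕ} (g : BS r k m) : (∑ j, cntB g j) = m := by
  unfold cntB
  rw [Finset.sum_comm]
  have : ∀ i : Fin m, (∑ j : Fin (k + 1), if g.1 i = j then 1 else 0) = 1 := by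
    intro i
    rw [Finset.sum_ite_eq Finset.univ (g.1 i) (fun _ => (1:ℕ)), if_pos (Finset.mem_univ _)]
  rw [Finset.sum_congr rfl (fun i _ => this i)]
  simp

lemma sumf_emb {r k m : ℕ} (g : BS r k m) :
    sumf (emb g) = ∑ j : Fin (k + 1), cntB g j * (j : ℕ) := by
  unfold sumf cntB emb
  have : ∀ j : Fin (k + 1), (∑ i : Fin m, if g.1 i = j then 1 else 0) * (j : ℕ)
      = ∑ i : Fin m, (if g.1 i = j then (j : ℕ) else 0) := by
    intro j
    rw [Finset.sum_mul]
    exact Finset.sum_congr rfl fun i _ => by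
      by_cases h : g.1 i = j
      · rw [if_pos h, if_pos h, one_mul]
      · rw [if_neg h, if_neg h, zero_mul]
  rw [Finset.sum_congr rfl (fun j _ => this j), Finset.sum_comm]
  apply Finset.sum_congr rfl
  intro i _
  rw [Finset.sum_ite_eq Finset.univ (g.1 i) (fun j => (j : ℕ)), if_pos (Finset.mem_univ _)]

lemma setS_eq (r k n : ℕ) :
    {f : CSeq r n | ValidSeq f ∧ maxf f ≤ k} =
      ↑(((Finset.univ : Finset (BS r k n)).filter validB).image emb) := by
  ext f
  simp only [Set.mem_setOf_eq, Finset.coe_image, Set.mem_image, Finset.mem_coe,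
    Finset.mem_filter, Finset.mem_univ, true_and]
  constructor
  · rintro ⟨hval, hmax⟩
    refine ⟨(fun i => ⟨f.1 i, ?_⟩, f.2), fun i hi => hval i hi, ?_⟩
    · exact Nat.lt_succ_of_le (le_trans (Finset.le_sup (Finset.mem_univ i)) hmax)
    · exact Prod.ext (funext fun i => rfl) rfl
  · rintro ⟨g, hg, rfl⟩
    refine ⟨fun i hi => hg i hi, ?_⟩
    unfold maxf
    apply Finset.sup_le
    intro i _
    exact Nat.lt_succ_iff.1 (g.1 i).isLt

end Core

/-- proof of Theorem 5.1: for every `k`,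
`Σ_{f ∈ N_0^{(r,n)}, max f ≤ k} q^{kn−|f|} p^{inv f} a^{col f}
  = Σ_{n_0+⋯+n_k=n} q^{Σ_j n_j(k−j)} [n̂]_{a[r−1]_{ap},p}! /
      ([n̂_0]_{a[r−1]_{ap},p}! [n_1]_p! ⋯ [n_k]_p!)`,
in the fraction field of `ℚ[q,p,a]` with `q = X 0`, `p = X 1`, `a = X 2`. -/
theorem stmt19 (r n k : ℕ) (hr : 0 < r)
    (π : CSeq r n → CPerm r n)
    (hπ : ∀ f, ValidSeq f → isPi f (π f) ∧ ∀ γ, isPi f γ → γ = π f) :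
    (algebraMap (MvPolynomial (Fin 3) ℚ) (FractionRing (MvPolynomial (Fin 3) ℚ)))
        (∑ᶠ f ∈ {f : CSeq r n | ValidSeq f ∧ maxf f ≤ k},
          (MvPolynomial.X 0 : MvPolynomial (Fin 3) ℚ) ^ (k * n - sumf f) *
            (MvPolynomial.X 1) ^ lenG (π f) * (MvPolynomial.X 2) ^ colG (π f)) =
      ∑ v ∈ Finset.Nat.antidiagonalTuple (k + 1) n,
        (algebraMap (MvPolynomial (Fin 3) ℚ) (FractionRing (MvPolynomial (Fin 3) ℚ)))
            ((MvPolynomial.X 0 : MvPolynomial (Fin 3) ℚ) ^ (∑ j : Fin (k + 1), v j * (k - (j : ℕ))) *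
              hqfact (MvPolynomial.X 2 * qint (MvPolynomial.X 2 * MvPolynomial.X 1) (r - 1))
                (MvPolynomial.X 1) n) /
          ((algebraMap (MvPolynomial (Fin 3) ℚ) (FractionRing (MvPolynomial (Fin 3) ℚ)))
              (hqfact (MvPolynomial.X 2 * qint (MvPolynomial.X 2 * MvPolynomial.X 1) (r - 1))
                (MvPolynomial.X 1) (v 0)) *
            ∏ j ∈ univ.filter (fun j : Fin (k + 1) => j ≠ 0),
              (algebraMap (MvPolynomial (Fin 3) ℚ) (FractionRing (MvPolynomial (Fin 3) ℚ)))
                (qfact (MvPolynomial.X 1) (v j))) := by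
  classical
  have hinj : Function.Injective
      (algebraMap (MvPolynomial (Fin 3) ℚ) (FractionRing (MvPolynomial (Fin 3) ℚ))) :=
    IsFractionRing.injective _ _
  -- Step 1: finsum over the set = finset sum over BS reps
  rw [setS_eq r k n, finsum_mem_coe_finset,
    Finset.sum_image (fun g _ g' _ h => emb_injective h)]
  -- Step 2: rewrite statistics via the bridge
  have hstat : ∀ g ∈ (Finset.univ : Finset (BS r k n)).filter validB,
      (MvPolynomial.X 0 : MvPolynomial (Fin 3) ℚ) ^ (k * n - sumf (emb g)) *
          MvPolynomial.X 1 ^ lenG (π (emb g)) * MvPolynomial.X 2 ^ colG (π (emb g))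
        = (MvPolynomial.X 0 : MvPolynomial (Fin 3) ℚ) ^ (k * n - sumf (emb g)) *
            MvPolynomial.X 1 ^ (IstatN (emb g) + CstatN (emb g)) *
            MvPolynomial.X 2 ^ colB g := by
    intro g hg
    rw [Finset.mem_filter] at hg
    have hval : ValidSeq (emb g) := fun i hi => hg.2 i hi
    have hpi := (hπ (emb g) hval).1
    rw [lenG_eq (emb g) _ hpi, colG_eq (emb g) _ hpi]
    rfl
  rw [Finset.sum_congr rfl hstat]
  -- Step 3: fiber by cntB
  have hmaps : ∀ g ∈ (Finset.univ : Finset (BS r k n)).filter validB,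
      cntB g ∈ Finset.Nat.antidiagonalTuple (k + 1) n :=
    fun g _ => Nat.mem_antidiagonalTuple.2 (cnt_total g)
  rw [← Finset.sum_fiberwise_of_maps_to hmaps]
  rw [map_sum]
  apply Finset.sum_congr rfl
  intro v hv
  have hvsum : (∑ j, v j) = n := Nat.mem_antidiagonalTuple.1 hv
  -- inner fiber
  rw [Finset.filter_filter]
  have hexp : ∀ g ∈ (Finset.univ : Finset (BS r k n)).filter
      (fun g => validB g ∧ cntB g = v),
      k * n - sumf (emb g) = ∑ j : Fin (k + 1), v j * (k - (j : ℕ)) := by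
    intro g hg
    rw [Finset.mem_filter] at hg
    have hsumf : sumf (emb g) = ∑ j : Fin (k + 1), v j * (j : ℕ) := by
      rw [sumf_emb, hg.2.2]
    have h1 : (∑ j : Fin (k + 1), v j * (j : ℕ)) +
        (∑ j : Fin (k + 1), v j * (k - (j : ℕ))) = k * n := by
      rw [← Finset.sum_add_distrib]
      have : ∀ j : Fin (k + 1), v j * (j : ℕ) + v j * (k - (j : ℕ)) = v j * k := by
        intro j
        have : (j : ℕ) ≤ k := Nat.lt_succ_iff.1 j.isLt
        rw [← Nat.mul_add]
        congr 1
        omega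
      rw [Finset.sum_congr rfl (fun j _ => this j), ← Finset.sum_mul, hvsum]
      ring
    omega
  have hfiber : (∑ g ∈ (Finset.univ : Finset (BS r k n)).filter
      (fun g => validB g ∧ cntB g = v),
      (MvPolynomial.X 0 : MvPolynomial (Fin 3) ℚ) ^ (k * n - sumf (emb g)) *
        MvPolynomial.X 1 ^ (IstatN (emb g) + CstatN (emb g)) *
        MvPolynomial.X 2 ^ colB g)
      = (MvPolynomial.X 0 : MvPolynomial (Fin 3) ℚ) ^
          (∑ j : Fin (k + 1), v j * (k - (j : ℕ))) * fiberSum r k n v := by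
    unfold fiberSum
    rw [Finset.mul_sum]
    apply Finset.sum_congr rfl
    intro g hg
    rw [hexp g hg, mul_assoc]
  rw [hfiber]
  -- Step 4: fraction field manipulation
  have hDv : (algebraMap (MvPolynomial (Fin 3) ℚ) (FractionRing (MvPolynomial (Fin 3) ℚ)))
        (hqfact (MvPolynomial.X 2 * qint (MvPolynomial.X 2 * MvPolynomial.X 1) (r - 1))
          (MvPolynomial.X 1) (v 0)) *
      ∏ j ∈ Finset.univ.filter (fun j : Fin (k + 1) => j ≠ 0),
        (algebraMap (MvPolynomial (Fin 3) ℚ) (FractionRing (MvPolynomial (Fin 3) ℚ)))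
          (qfact (MvPolynomial.X 1) (v j))
      = (algebraMap (MvPolynomial (Fin 3) ℚ) (FractionRing (MvPolynomial (Fin 3) ℚ)))
          (Dv r v) := by
    unfold Dv bpoly
    rw [map_mul, map_prod]
  rw [hDv]
  have hDvne : Dv r v ≠ 0 := by
    unfold Dv
    apply mul_ne_zero (hqfact_ne_zero _ _)
    rw [Finset.prod_ne_zero_iff]
    intro j _
    exact qfact_ne_zero _
  have hDvne' : (algebraMap (MvPolynomial (Fin 3) ℚ) (FractionRing (MvPolynomial (Fin 3) ℚ)))
      (Dv r v) ≠ 0 := fun h => hDvne (hinj (h.trans (map_zero _).symm))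
  rw [eq_div_iff hDvne', ← map_mul]
  apply congrArg
  have : (MvPolynomial.X 2 : MvPolynomial (Fin 3) ℚ) *
      qint (MvPolynomial.X 2 * MvPolynomial.X 1) (r - 1) = bpoly r := rfl
  rw [this, mul_assoc, coreB r k hr n v hvsum]

end Paper
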